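/- Let Z be a nonempty finite type, P : Z → Z → ℝ a row-stochastic matrix that is irreducible, W a nonempty subset of Z, and a ∈ Z. For b ∈ W and m ≥ 1, let F_b(m) be the sum of Prob(x) over all paths x of length m with x₀ = a that visit W and whose first state belonging to W is b (i.e., some x_i ∈ W, and x_j = b for the least index j with x_j ∈ W). Then for every b ∈ W the limit p̄_{W,a,b} = lim_{m→∞} F_b(m) exists, and ∑_{b∈W} p̄_{W,a,b} = 1. -/

import Mathlib

open scoped Classical

/-- Probability of a path `x = (x₀, …, x_m)` of length `m`:
`Prob(x) = ∏_{i=1}^m P(x_{i-1}, x_i)`. -/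
def pathProb {Z : Type*} (P : Z → Z → ℝ) {m : ℕ} (x : Fin (m + 1) → Z) : ℝ :=
  ∏ i : Fin m, P (x i.castSucc) (x i.succ)

/-- `P` is a row-stochastic matrix. -/
def RowStochastic {Z : Type*} [Fintype Z] (P : Z → Z → ℝ) : Prop :=
  (∀ a b, 0 ≤ P a b) ∧ ∀ a, ∑ b, P a b = 1

/-- The chain is irreducible: for all `a b` there is `m ≥ 1` with `(P^m)(a,b) > 0`. -/
def IsIrreducibleChain {Z : Type*} [Fintype Z] [DecidableEq Z] (P : Z → Z → ℝ) : Prop :=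
  ∀ a b : Z, ∃ m : ℕ, 1 ≤ m ∧ 0 < (Matrix.of P ^ m) a b

/-- `F_b(m)`: the sum of `Prob(x)` over all paths `x` of length `m` with `x₀ = a` that
visit `W` and whose first state belonging to `W` is `b`. -/
noncomputable def firstVisitProb {Z : Type*} [Fintype Z] (P : Z → Z → ℝ) (W : Finset Z)
    (a b : Z) (m : ℕ) : ℝ :=
  ∑ x ∈ Finset.univ.filter (fun x : Fin (m + 1) → Z =>
      x 0 = a ∧ ∃ j : Fin (m + 1), x j = b ∧ ∀ i < j, x i ∉ W),
    pathProb P x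

section Aux
open Finset
set_option linter.unusedSectionVars false
set_option linter.unusedVariables false
variable {Z : Type*} [Fintype Z] [DecidableEq Z]

lemma pathProb_snoc (P : Z → Z → ℝ) {m : ℕ} (x : Fin (m+1) → Z) (z : Z) :
    pathProb P (Fin.snoc x z) = pathProb P x * P (x (Fin.last m)) z := by
  unfold pathProb
  rw [Fin.prod_univ_castSucc]
  simp [Fin.succ_castSucc, -Fin.castSucc_succ, Fin.snoc_castSucc, Fin.snoc_last]

lemma pathProb_cons (P : Z → Z → ℝ) {m : ℕ} (a : Z) (y : Fin (m+1) → Z) :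
    pathProb P (Fin.cons a y : Fin (m+2) → Z) = P a (y 0) * pathProb P y := by
  unfold pathProb
  rw [Fin.prod_univ_succ]
  simp [Fin.cons_succ, ← Fin.succ_castSucc]

lemma sum_snoc {M : Type*} [AddCommMonoid M] {m : ℕ} (f : (Fin (m+2) → Z) → M) :
    ∑ x : Fin (m+2) → Z, f x = ∑ y : Fin (m+1) → Z, ∑ z : Z, f (Fin.snoc y z) := by
  have hb : Function.Bijective (fun p : (Fin (m+1) → Z) × Z => Fin.snoc p.1 p.2 : _ → Fin (m+2) → Z) := by
    constructor
    · rintro ⟨y, z⟩ ⟨y', z'⟩ h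
      have h1 : y = y' := by
        have := congrArg Fin.init h
        simpa [Fin.init_snoc] using this
      have h2 : z = z' := by
        have := congrArg (fun g => g (Fin.last (m+1))) h
        simpa [Fin.snoc_last] using this
      simp [h1, h2]
    · intro x
      exact ⟨⟨Fin.init x, x (Fin.last _)⟩, Fin.snoc_init_self x⟩
  rw [← Fintype.sum_bijective _ hb (fun p => f (Fin.snoc p.1 p.2)) f (fun p => rfl),
    Fintype.sum_prod_type]

lemma sumCons {M : Type*} [AddCommMonoid M] {m : ℕ} (f : (Fin (m+2) → Z) → M) :
    ∑ x : Fin (m+2) → Z, f x = ∑ z : Z, ∑ y : Fin (m+1) → Z, f (Fin.cons z y) := by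
  have hb : Function.Bijective (fun p : Z × (Fin (m+1) → Z) => Fin.cons p.1 p.2 : _ → Fin (m+2) → Z) := by
    constructor
    · rintro ⟨z, y⟩ ⟨z', y'⟩ h
      have h1 : z = z' := by
        have := congrArg (fun g => g 0) h
        simpa using this
      have h2 : y = y' := by
        have := congrArg Fin.tail h
        simpa [Fin.tail_cons] using this
      simp [h1, h2]
    · intro x
      exact ⟨⟨x 0, Fin.tail x⟩, Fin.cons_self_tail x⟩
  rw [← Fintype.sum_bijective _ hb (fun p => f (Fin.cons p.1 p.2)) f (fun p => rfl),
    Fintype.sum_prod_type]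

lemma snoc_zero' {m : ℕ} (y : Fin (m+1) → Z) (z : Z) : (Fin.snoc y z : Fin (m+2) → Z) 0 = y 0 := by
  rw [show (0 : Fin (m+2)) = Fin.castSucc 0 by simp, Fin.snoc_castSucc]

lemma pathProb_nonneg (P : Z → Z → ℝ) (hP : ∀ a b, 0 ≤ P a b) {m : ℕ} (x : Fin (m+1) → Z) :
    0 ≤ pathProb P x :=
  Finset.prod_nonneg fun i _ => hP _ _

lemma sum_fin_one {M : Type*} [AddCommMonoid M] (f : (Fin 1 → Z) → M) :
    ∑ x : Fin 1 → Z, f x = ∑ z : Z, f (fun _ => z) := by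
  exact Fintype.sum_bijective (fun z : Z => (fun _ => z : Fin 1 → Z))
    ⟨fun a b h => congrFun h 0, fun x => ⟨x 0, by funext i; rw [Subsingleton.elim i 0]⟩⟩
    _ _ (fun z => rfl) |>.symm

lemma total_mass (P : Z → Z → ℝ) (hP : RowStochastic P) (a : Z) :
    ∀ m : ℕ, ∑ x : Fin (m+1) → Z, (if x 0 = a then pathProb P x else 0) = 1 := by
  intro m
  induction m with
  | zero =>
    rw [sum_fin_one]
    simp [pathProb]
  | succ n ih =>
    rw [sum_snoc]
    have : ∀ y : Fin (n+1) → Z, ∑ z : Z,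
        (if (Fin.snoc y z : Fin (n+2) → Z) 0 = a then pathProb P (Fin.snoc y z) else 0)
        = if y 0 = a then pathProb P y else 0 := by
      intro y
      by_cases hy : y 0 = a
      · simp only [snoc_zero', hy, if_pos, pathProb_snoc]
        rw [← Finset.mul_sum, hP.2, mul_one]
      · simp [snoc_zero', hy]
    rw [Finset.sum_congr rfl fun y _ => this y, ih]

lemma matrix_pow_eq_sum (P : Z → Z → ℝ) (a : Z) :
    ∀ m : ℕ, ∀ b : Z, (Matrix.of P ^ m) a b =
      ∑ x : Fin (m+1) → Z, (if x 0 = a ∧ x (Fin.last m) = b then pathProb P x else 0) := by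
  intro m
  induction m with
  | zero =>
    intro b
    rw [sum_fin_one]
    rcases eq_or_ne a b with h | h
    · subst h
      simp [pathProb, Matrix.one_apply]
    · simp only [pathProb, Finset.univ_eq_empty, Finset.prod_empty]
      rw [pow_zero, Matrix.one_apply_ne h]
      rw [Finset.sum_eq_zero]
      intro z _
      split_ifs with hz
      · exact absurd (hz.1.symm.trans hz.2) h
      · rfl
  | succ n ih =>
    intro b
    rw [pow_succ, Matrix.mul_apply, sum_snoc]
    have hinner : ∀ y : Fin (n+1) → Z, ∑ z : Z,
        (if (Fin.snoc y z : Fin (n+2) → Z) 0 = a ∧ (Fin.snoc y z : Fin (n+2) → Z) (Fin.last (n+1)) = b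
          then pathProb P (Fin.snoc y z) else 0)
        = if y 0 = a then pathProb P y * P (y (Fin.last n)) b else 0 := by
      intro y
      by_cases hy : y 0 = a
      · simp only [snoc_zero', Fin.snoc_last, hy, true_and, pathProb_snoc, if_pos]
        rw [Finset.sum_ite_eq' Finset.univ b]
        simp
      · simp [snoc_zero', hy]
    rw [Finset.sum_congr rfl fun y _ => hinner y]
    have hfib : ∀ y : Fin (n+1) → Z, (if y 0 = a then pathProb P y * P (y (Fin.last n)) b else 0)
        = ∑ c : Z, (if y 0 = a ∧ y (Fin.last n) = c then pathProb P y else 0) * P c b := by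
      intro y
      by_cases hy : y 0 = a
      · simp only [hy, true_and, if_pos]
        rw [Finset.sum_congr rfl (fun c _ => by rw [ite_mul, zero_mul])]
        rw [Finset.sum_ite_eq Finset.univ (y (Fin.last n))]
        simp
      · simp [hy]
    rw [Finset.sum_congr rfl fun y _ => hfib y, Finset.sum_comm]
    apply Finset.sum_congr rfl
    intro c _
    rw [← Finset.sum_mul, ← ih c]
    rfl

noncomputable def avoidProb (P : Z → Z → ℝ) (W : Finset Z) (a : Z) (m : ℕ) : ℝ :=
  ∑ x : Fin (m+1) → Z, (if x 0 = a ∧ ∀ i, x i ∉ W then pathProb P x else 0)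

lemma avoidProb_nonneg (P : Z → Z → ℝ) (hP : RowStochastic P) (W : Finset Z) (a : Z) (m : ℕ) :
    0 ≤ avoidProb P W a m := by
  apply Finset.sum_nonneg
  intro x _
  split_ifs
  · exact pathProb_nonneg P hP.1 x
  · exact le_rfl

lemma avoidProb_le_one (P : Z → Z → ℝ) (hP : RowStochastic P) (W : Finset Z) (a : Z) (m : ℕ) :
    avoidProb P W a m ≤ 1 := by
  rw [← total_mass P hP a m]
  apply Finset.sum_le_sum
  intro x _
  split_ifs with h1 h2 h2
  · exact le_rfl
  · exact absurd h1.1 h2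
  · exact pathProb_nonneg P hP.1 x
  · exact le_rfl

lemma avoidProb_mem (P : Z → Z → ℝ) (W : Finset Z) (a : Z) (ha : a ∈ W) (m : ℕ) :
    avoidProb P W a m = 0 := by
  apply Finset.sum_eq_zero
  intro x _
  rw [if_neg]
  rintro ⟨h0, hav⟩
  exact hav 0 (h0 ▸ ha)

lemma avoidProb_zero (P : Z → Z → ℝ) (W : Finset Z) (a : Z) :
    avoidProb P W a 0 = if a ∈ W then 0 else 1 := by
  by_cases ha : a ∈ W
  · rw [if_pos ha, avoidProb_mem P W a ha]
  · rw [if_neg ha]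
    unfold avoidProb
    rw [sum_fin_one]
    rw [Finset.sum_eq_single a]
    · simp [pathProb, ha]
    · intro z _ hz
      rw [if_neg]
      rintro ⟨h0, -⟩
      exact hz h0
    · intro h
      exact absurd (Finset.mem_univ a) h

lemma avoidProb_succ (P : Z → Z → ℝ) (W : Finset Z) (a : Z) (m : ℕ) :
    avoidProb P W a (m+1) =
      if a ∈ W then 0 else ∑ z : Z, P a z * avoidProb P W z m := by
  by_cases ha : a ∈ W
  · rw [if_pos ha, avoidProb_mem P W a ha]
  rw [if_neg ha]
  unfold avoidProb
  rw [sumCons]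
  have h1 : ∀ z : Z, (∑ y : Fin (m+1) → Z,
      if (Fin.cons z y : Fin (m+2) → Z) 0 = a ∧ (∀ i, (Fin.cons z y : Fin (m+2) → Z) i ∉ W)
        then pathProb P (Fin.cons z y) else 0)
      = if z = a then (∑ y : Fin (m+1) → Z,
          if (∀ i, y i ∉ W) then P a (y 0) * pathProb P y else 0) else 0 := by
    intro z
    by_cases hz : z = a
    · subst hz
      rw [if_pos rfl]
      apply Finset.sum_congr rfl
      intro y _
      by_cases hy : ∀ i, y i ∉ W
      · rw [if_pos hy, if_pos, pathProb_cons]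
        refine ⟨Fin.cons_zero _ _, ?_⟩
        intro i
        refine Fin.cases ?_ (fun j => ?_) i
        · rw [Fin.cons_zero]; exact ha
        · rw [Fin.cons_succ]; exact hy j
      · rw [if_neg hy, if_neg]
        rintro ⟨-, hav⟩
        exact hy fun j => by have := hav j.succ; rwa [Fin.cons_succ] at this
    · rw [if_neg hz]
      apply Finset.sum_eq_zero
      intro y _
      rw [if_neg]
      rintro ⟨h0, -⟩
      rw [Fin.cons_zero] at h0
      exact hz h0
  rw [Finset.sum_congr rfl fun z _ => h1 z, Finset.sum_ite_eq' Finset.univ a,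
    if_pos (Finset.mem_univ a)]
  have h2 : ∀ y : Fin (m+1) → Z, (if (∀ i, y i ∉ W) then P a (y 0) * pathProb P y else 0)
      = ∑ w : Z, P a w * (if y 0 = w ∧ (∀ i, y i ∉ W) then pathProb P y else 0) := by
    intro y
    by_cases hy : ∀ i, y i ∉ W
    · rw [if_pos hy]
      have hterm : ∀ w : Z, P a w * (if y 0 = w ∧ (∀ i, y i ∉ W) then pathProb P y else 0)
          = if y 0 = w then P a w * pathProb P y else 0 := by
        intro w
        by_cases h : y 0 = w <;> simp [h, hy]
      rw [Finset.sum_congr rfl fun w _ => hterm w, Finset.sum_ite_eq Finset.univ (y 0)]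
      simp
    · rw [if_neg hy]
      symm
      apply Finset.sum_eq_zero
      intro w _
      rw [if_neg, mul_zero]
      rintro ⟨-, h⟩
      exact hy h
  rw [Finset.sum_congr rfl fun y _ => h2 y, Finset.sum_comm]
  apply Finset.sum_congr rfl
  intro w _
  rw [← Finset.mul_sum]

lemma avoidProb_succ_le (P : Z → Z → ℝ) (hP : RowStochastic P) (W : Finset Z) :
    ∀ m : ℕ, ∀ a : Z, avoidProb P W a (m+1) ≤ avoidProb P W a m := by
  intro m
  induction m with
  | zero =>
    intro a
    rw [avoidProb_succ, avoidProb_zero]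
    by_cases ha : a ∈ W
    · simp [ha]
    · rw [if_neg ha, if_neg ha]
      calc ∑ z : Z, P a z * avoidProb P W z 0 ≤ ∑ z : Z, P a z * 1 := by
            apply Finset.sum_le_sum
            intro z _
            exact mul_le_mul_of_nonneg_left (avoidProb_le_one P hP W z 0) (hP.1 a z)
        _ = 1 := by simp [hP.2 a]
  | succ n ih =>
    intro a
    rw [avoidProb_succ, avoidProb_succ]
    by_cases ha : a ∈ W
    · simp [ha]
    · rw [if_neg ha, if_neg ha]
      apply Finset.sum_le_sum
      intro z _
      exact mul_le_mul_of_nonneg_left (ih z) (hP.1 a z)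

lemma avoidProb_antitone (P : Z → Z → ℝ) (hP : RowStochastic P) (W : Finset Z) (a : Z) :
    Antitone (fun m => avoidProb P W a m) :=
  antitone_nat_of_succ_le fun m => avoidProb_succ_le P hP W m a

lemma avoidProb_add_le (P : Z → Z → ℝ) (hP : RowStochastic P) (W : Finset Z) (t : ℕ) (C : ℝ)
    (hC0 : 0 ≤ C) (hC : ∀ z, avoidProb P W z t ≤ C) :
    ∀ n : ℕ, ∀ a : Z, avoidProb P W a (n + t) ≤ avoidProb P W a n * C := by
  intro n
  induction n with
  | zero =>
    intro a
    rw [zero_add, avoidProb_zero]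
    by_cases ha : a ∈ W
    · rw [if_pos ha, avoidProb_mem P W a ha, zero_mul]
    · rw [if_neg ha, one_mul]
      exact hC a
  | succ n ih =>
    intro a
    have hrw : n + 1 + t = (n + t) + 1 := by omega
    rw [hrw, avoidProb_succ, avoidProb_succ]
    by_cases ha : a ∈ W
    · rw [if_pos ha, if_pos ha, zero_mul]
    · rw [if_neg ha, if_neg ha, Finset.sum_mul]
      apply Finset.sum_le_sum
      intro z _
      rw [mul_assoc]
      exact mul_le_mul_of_nonneg_left (ih z) (hP.1 a z)

lemma avoidProb_lt_one (P : Z → Z → ℝ) (hP : RowStochastic P) (W : Finset Z) (w : Z)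
    (hw : w ∈ W) (a : Z) (m : ℕ) (hm : 0 < (Matrix.of P ^ m) a w) :
    avoidProb P W a m < 1 := by
  rw [matrix_pow_eq_sum] at hm
  obtain ⟨x, -, hx⟩ := Finset.exists_lt_of_sum_lt
    (show ∑ _y : Fin (m+1) → Z, (0:ℝ) <
        ∑ y : Fin (m+1) → Z, (if y 0 = a ∧ y (Fin.last m) = w then pathProb P y else 0) by
      simpa using hm)
  have hxc : x 0 = a ∧ x (Fin.last m) = w := by
    by_contra h
    rw [if_neg h] at hx
    exact absurd hx (lt_irrefl 0)
  rw [if_pos hxc] at hx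
  -- avoidProb + pathProb x ≤ 1
  have key : avoidProb P W a m + pathProb P x ≤ 1 := by
    rw [← total_mass P hP a m]
    have : avoidProb P W a m + pathProb P x = ∑ y : Fin (m+1) → Z,
        ((if y 0 = a ∧ ∀ i, y i ∉ W then pathProb P y else 0)
          + (if y = x then pathProb P x else 0)) := by
      rw [Finset.sum_add_distrib, Finset.sum_ite_eq' Finset.univ x, if_pos (Finset.mem_univ x)]
      rfl
    rw [this]
    apply Finset.sum_le_sum
    intro y _
    by_cases hy : y = x
    · subst hy
      rw [if_pos hxc.1, if_pos rfl, if_neg]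
      · rw [zero_add]
      · rintro ⟨-, hav⟩
        exact hav (Fin.last m) (hxc.2 ▸ hw)
    · rw [if_neg hy, add_zero]
      split_ifs with h1 h2 h2
      · exact le_rfl
      · exact absurd h1.1 h2
      · exact pathProb_nonneg P hP.1 y
      · exact le_rfl
  linarith

lemma avoidProb_tendsto_zero (P : Z → Z → ℝ) [Nonempty Z] (hP : RowStochastic P)
    (hirr : IsIrreducibleChain P) (W : Finset Z) (hW : W.Nonempty) (a : Z) :
    Filter.Tendsto (fun m => avoidProb P W a m) Filter.atTop (nhds 0) := by
  obtain ⟨w, hw⟩ := hW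
  -- choose, for each state, a length witnessing positivity
  have hex : ∀ z : Z, ∃ m : ℕ, 1 ≤ m ∧ 0 < (Matrix.of P ^ m) z w := fun z => hirr z w
  choose f hf1 hf2 using hex
  set N : ℕ := Finset.univ.sup f with hN
  have hN1 : 1 ≤ N := le_trans (hf1 (Classical.arbitrary Z))
    (Finset.le_sup (Finset.mem_univ _))
  have hlt : ∀ z : Z, avoidProb P W z N < 1 := by
    intro z
    have h1 : avoidProb P W z N ≤ avoidProb P W z (f z) :=
      avoidProb_antitone P hP W z (Finset.le_sup (Finset.mem_univ z))
    exact lt_of_le_of_lt h1 (avoidProb_lt_one P hP W w hw z (f z) (hf2 z))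
  set c : ℝ := Finset.univ.sup' Finset.univ_nonempty (fun z => avoidProb P W z N) with hc
  have hc1 : c < 1 := by
    rw [hc, Finset.sup'_lt_iff]
    intro z _
    exact hlt z
  have hc0 : 0 ≤ c :=
    le_trans (avoidProb_nonneg P hP W (Classical.arbitrary Z) N)
      (Finset.le_sup' (fun z => avoidProb P W z N) (Finset.mem_univ (Classical.arbitrary Z)))
  have hcb : ∀ z, avoidProb P W z N ≤ c := fun z =>
    Finset.le_sup' (fun z => avoidProb P W z N) (Finset.mem_univ z)
  have hpow : ∀ k : ℕ, ∀ z : Z, avoidProb P W z (k * N) ≤ c ^ k := by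
    intro k
    induction k with
    | zero =>
      intro z
      rw [zero_mul, pow_zero]
      exact avoidProb_le_one P hP W z 0
    | succ k ih =>
      intro z
      have : (k + 1) * N = k * N + N := by ring
      rw [this, pow_succ]
      calc avoidProb P W z (k * N + N) ≤ avoidProb P W z (k * N) * c :=
            avoidProb_add_le P hP W N c hc0 hcb (k * N) z
        _ ≤ c ^ k * c := mul_le_mul_of_nonneg_right (ih z) hc0
  -- squeeze
  have hub : ∀ m : ℕ, avoidProb P W a m ≤ c ^ (m / N) := by
    intro m
    calc avoidProb P W a m ≤ avoidProb P W a ((m / N) * N) :=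
          avoidProb_antitone P hP W a (Nat.div_mul_le_self m N)
      _ ≤ c ^ (m / N) := hpow (m / N) a
  have hdiv : Filter.Tendsto (fun m : ℕ => m / N) Filter.atTop Filter.atTop := by
    apply Filter.tendsto_atTop_atTop.2
    intro b
    exact ⟨b * N, fun n hn => (Nat.le_div_iff_mul_le (by omega)).2 hn⟩
  have hpow0 : Filter.Tendsto (fun m : ℕ => c ^ (m / N)) Filter.atTop (nhds 0) :=
    (tendsto_pow_atTop_nhds_zero_of_lt_one hc0 hc1).comp hdiv
  exact squeeze_zero (fun m => avoidProb_nonneg P hP W a m) hub hpow0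

lemma firstVisitProb_eq (P : Z → Z → ℝ) (W : Finset Z) (a b : Z) (m : ℕ) :
    firstVisitProb P W a b m = ∑ x : Fin (m+1) → Z,
      (if x 0 = a ∧ ∃ j : Fin (m + 1), x j = b ∧ ∀ i < j, x i ∉ W
        then pathProb P x else 0) := by
  rw [firstVisitProb, Finset.sum_filter]
  apply Finset.sum_congr rfl
  intro x _
  by_cases h : x 0 = a ∧ ∃ j : Fin (m+1), x j = b ∧ ∀ i < j, x i ∉ W <;> simp [h]

lemma firstVisit_mono (P : Z → Z → ℝ) (hP : RowStochastic P) (W : Finset Z) (a b : Z) (m : ℕ) :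
    firstVisitProb P W a b m ≤ firstVisitProb P W a b (m+1) := by
  rw [firstVisitProb_eq, firstVisitProb_eq, sum_snoc]
  apply Finset.sum_le_sum
  intro y _
  by_cases hy : y 0 = a ∧ ∃ j : Fin (m+1), y j = b ∧ ∀ i < j, y i ∉ W
  · rw [if_pos hy]
    have hext : ∀ z : Z, ((Fin.snoc y z : Fin (m+2) → Z) 0 = a ∧
        ∃ j : Fin (m+2), (Fin.snoc y z : Fin (m+2) → Z) j = b ∧
          ∀ i < j, (Fin.snoc y z : Fin (m+2) → Z) i ∉ W) := by
      intro z
      refine ⟨by rw [snoc_zero', hy.1], ?_⟩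
      obtain ⟨j, hj, hlt⟩ := hy.2
      refine ⟨j.castSucc, by rw [Fin.snoc_castSucc, hj], ?_⟩
      intro i hi hiW
      have him : (i : ℕ) < m + 1 := lt_of_lt_of_le hi (by simp [Fin.le_def, Nat.lt_succ_iff.1 j.isLt])
      set i' : Fin (m+1) := ⟨(i : ℕ), him⟩ with hi'
      have hcast : Fin.castSucc i' = i := Fin.ext rfl
      rw [← hcast, Fin.snoc_castSucc] at hiW
      have hij : i' < j := by
        rw [Fin.lt_def]
        exact hi
      exact hlt i' hij hiW
    have : ∀ z : Z, (if (Fin.snoc y z : Fin (m+2) → Z) 0 = a ∧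
          ∃ j : Fin (m+2), (Fin.snoc y z : Fin (m+2) → Z) j = b ∧
            ∀ i < j, (Fin.snoc y z : Fin (m+2) → Z) i ∉ W
          then pathProb P (Fin.snoc y z) else 0)
        = pathProb P y * P (y (Fin.last m)) z := by
      intro z
      rw [if_pos (hext z), pathProb_snoc]
    rw [Finset.sum_congr rfl fun z _ => this z, ← Finset.mul_sum, hP.2, mul_one]
  · rw [if_neg hy]
    apply Finset.sum_nonneg
    intro z _
    split_ifs
    · exact pathProb_nonneg P hP.1 _
    · exact le_rfl

lemma firstVisit_nonneg (P : Z → Z → ℝ) (hP : RowStochastic P) (W : Finset Z) (a b : Z) (m : ℕ) :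
    0 ≤ firstVisitProb P W a b m := by
  rw [firstVisitProb_eq]
  apply Finset.sum_nonneg
  intro x _
  split_ifs
  · exact pathProb_nonneg P hP.1 _
  · exact le_rfl

lemma firstVisit_le_one (P : Z → Z → ℝ) (hP : RowStochastic P) (W : Finset Z) (a b : Z) (m : ℕ) :
    firstVisitProb P W a b m ≤ 1 := by
  rw [firstVisitProb_eq, ← total_mass P hP a m]
  apply Finset.sum_le_sum
  intro x _
  split_ifs with h1 h2 h2
  · exact le_rfl
  · exact absurd h1.1 h2
  · exact pathProb_nonneg P hP.1 x
  · exact le_rfl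

lemma key_point (W : Finset Z) (a : Z) {m : ℕ} (x : Fin (m+1) → Z) (r : ℝ) :
    ∑ b ∈ W, (if (x 0 = a ∧ ∃ j : Fin (m+1), x j = b ∧ ∀ i < j, x i ∉ W) then r else 0)
      = if (x 0 = a ∧ ∃ i : Fin (m+1), x i ∈ W) then r else 0 := by
  by_cases h0 : x 0 = a
  · by_cases hh : ∃ i : Fin (m+1), x i ∈ W
    · rw [if_pos ⟨h0, hh⟩]
      set S : Finset (Fin (m+1)) := Finset.univ.filter (fun i => x i ∈ W) with hS
      have hSne : S.Nonempty := by
        obtain ⟨i, hi⟩ := hh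
        exact ⟨i, by simp [hS, hi]⟩
      set j0 : Fin (m+1) := S.min' hSne with hj0
      have hj0W : x j0 ∈ W := (Finset.mem_filter.1 (S.min'_mem hSne)).2
      have hiff : ∀ b ∈ W, ((x 0 = a ∧ ∃ j : Fin (m+1), x j = b ∧ ∀ i < j, x i ∉ W)
          ↔ b = x j0) := by
        intro b hb
        constructor
        · rintro ⟨-, j, hj, hlt⟩
          have hjS : j ∈ S := by simp [hS, hj ▸ hb]
          have hle : j0 ≤ j := S.min'_le j hjS
          rcases lt_or_eq_of_le hle with hlt' | heq
          · exact absurd hj0W (hlt j0 hlt')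
          · rw [heq]
            exact hj.symm
        · rintro rfl
          refine ⟨h0, j0, rfl, ?_⟩
          intro i hi hiW
          have hiS : i ∈ S := by simp [hS, hiW]
          exact absurd (S.min'_le i hiS) (not_le.2 hi)
      have : ∀ b ∈ W, (if (x 0 = a ∧ ∃ j : Fin (m+1), x j = b ∧ ∀ i < j, x i ∉ W) then r else 0)
          = if b = x j0 then r else 0 := by
        intro b hb
        rw [if_congr (hiff b hb) rfl rfl]
      rw [Finset.sum_congr rfl this, Finset.sum_ite_eq' W (x j0), if_pos hj0W]
    · rw [if_neg (fun h => hh h.2)]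
      apply Finset.sum_eq_zero
      intro b hb
      rw [if_neg]
      rintro ⟨-, j, hj, -⟩
      exact hh ⟨j, hj ▸ hb⟩
  · rw [if_neg (fun h => h0 h.1)]
    apply Finset.sum_eq_zero
    intro b _
    rw [if_neg (fun h => h0 h.1)]

lemma sum_firstVisit (P : Z → Z → ℝ) (hP : RowStochastic P) (W : Finset Z) (a : Z) (m : ℕ) :
    ∑ b ∈ W, firstVisitProb P W a b m = 1 - avoidProb P W a m := by
  have h1 : ∑ b ∈ W, firstVisitProb P W a b m = ∑ x : Fin (m+1) → Z,
      (if (x 0 = a ∧ ∃ i : Fin (m+1), x i ∈ W) then pathProb P x else 0) := by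
    rw [Finset.sum_congr rfl fun b _ => firstVisitProb_eq P W a b m, Finset.sum_comm]
    exact Finset.sum_congr rfl fun x _ => key_point W a x (pathProb P x)
  rw [h1, ← total_mass P hP a m, avoidProb, ← Finset.sum_sub_distrib]
  apply Finset.sum_congr rfl
  intro x _
  by_cases h0 : x 0 = a
  · by_cases hh : ∃ i : Fin (m+1), x i ∈ W
    · rw [if_pos ⟨h0, hh⟩, if_pos h0, if_neg, sub_zero]
      rintro ⟨-, hav⟩
      obtain ⟨i, hi⟩ := hh
      exact hav i hi
    · rw [if_neg (fun h => hh h.2), if_pos h0, if_pos ⟨h0, fun i hi => hh ⟨i, hi⟩⟩, sub_self]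
  · rw [if_neg (fun h => h0 h.1), if_neg h0, if_neg (fun h => h0 h.1), sub_self]


end Aux

theorem stmt_4 {Z : Type*} [Fintype Z] [Nonempty Z] [DecidableEq Z] (P : Z → Z → ℝ)
    (hP : RowStochastic P) (hirr : IsIrreducibleChain P)
    (W : Finset Z) (hW : W.Nonempty) (a : Z) :
    ∃ p : Z → ℝ,
      (∀ b ∈ W, Filter.Tendsto (fun m : ℕ => firstVisitProb P W a b m)
        Filter.atTop (nhds (p b))) ∧
      ∑ b ∈ W, p b = 1 := by
  set p : Z → ℝ := fun b => ⨆ m : ℕ, firstVisitProb P W a b m with hp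
  have htends : ∀ b : Z, Filter.Tendsto (fun m : ℕ => firstVisitProb P W a b m)
      Filter.atTop (nhds (p b)) := by
    intro b
    apply tendsto_atTop_ciSup
    · exact monotone_nat_of_le_succ fun m => firstVisit_mono P hP W a b m
    · exact ⟨1, Set.forall_mem_range.2 fun m => firstVisit_le_one P hP W a b m⟩
  refine ⟨p, fun b _ => htends b, ?_⟩
  have hsum : Filter.Tendsto (fun m : ℕ => ∑ b ∈ W, firstVisitProb P W a b m)
      Filter.atTop (nhds (∑ b ∈ W, p b)) :=
    tendsto_finset_sum W fun b _ => htends b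
  have hsum2 : Filter.Tendsto (fun m : ℕ => ∑ b ∈ W, firstVisitProb P W a b m)
      Filter.atTop (nhds 1) := by
    have : (fun m : ℕ => ∑ b ∈ W, firstVisitProb P W a b m)
        = fun m : ℕ => 1 - avoidProb P W a m := by
      funext m
      exact sum_firstVisit P hP W a m
    rw [this]
    have := (tendsto_const_nhds (x := (1:ℝ)) (f := Filter.atTop (α := ℕ))).sub
      (avoidProb_tendsto_zero P hP hirr W hW a)
    simpa using this
  exact tendsto_nhds_unique hsum hsum2
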